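/- Let S be a polynomial ring over a field k and I a radical homogeneous ideal. For every odd integer σ > 1 and every b ∈ S[t], if b^σ ∈ S[It,t^2] then b ∈ S[It,t^2]. -/

import Mathlib

open Polynomial

/-- The Rees-like algebra `S[It, t²]`: the `S`-subalgebra of `S[t]` generated by
`{f·t : f ∈ I}` and `t²`. -/
noncomputable def ReesLike (S : Type*) [CommRing S] (I : Ideal S) : Subalgebra S (Polynomial S) :=
  Algebra.adjoin S ({p : Polynomial S | ∃ a ∈ I, p = Polynomial.C a * Polynomial.X} ∪
    {Polynomial.X ^ 2})

section Helpers

variable {R : Type*} [CommRing R]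

/-- Parity of products of parity-supported polynomials. -/
lemma coeff_mul_parity {f g : R[X]} {rf rg : ℕ}
    (hf : ∀ j, j % 2 ≠ rf → f.coeff j = 0) (hg : ∀ j, j % 2 ≠ rg → g.coeff j = 0)
    {n : ℕ} (hn : n % 2 ≠ (rf + rg) % 2) : (f * g).coeff n = 0 := by
  rw [Polynomial.coeff_mul]
  apply Finset.sum_eq_zero
  rintro ⟨a, b⟩ hab
  simp only [Finset.HasAntidiagonal.mem_antidiagonal] at hab
  by_cases ha : a % 2 = rf
  · by_cases hb : b % 2 = rg
    · exfalso; omega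
    · rw [hg b hb, mul_zero]
  · rw [hf a ha, zero_mul]

lemma even_pow_even {f : R[X]} (hf : ∀ j, Odd j → f.coeff j = 0) (m : ℕ) :
    ∀ j, Odd j → (f ^ m).coeff j = 0 := by
  induction m with
  | zero =>
    intro j hj
    have hj0 : j ≠ 0 := hj.pos.ne'
    rw [pow_zero, Polynomial.coeff_one]
    simp [hj0, Ne.symm hj0]
  | succ m ih =>
    intro j hj
    rw [pow_succ]
    refine coeff_mul_parity (rf := 0) (rg := 0) ?_ ?_ ?_
    · intro i hi; exact ih i (Nat.odd_iff.mpr (by omega))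
    · intro i hi; exact hf i (Nat.odd_iff.mpr (by omega))
    · have := Nat.odd_iff.mp hj; omega

/-- The odd part of a polynomial. -/
noncomputable def oddPart (f : R[X]) : R[X] :=
  ⟨⟨f.toFinsupp.coeff.filter (fun j => Odd j)⟩⟩

lemma coeff_oddPart (f : R[X]) (k : ℕ) :
    (oddPart f).coeff k = if Odd k then f.coeff k else 0 := by
  classical
  rcases f with ⟨f⟩
  simp [oddPart, Polynomial.coeff, Finsupp.filter_apply]

/-- coefficients of `f.comp (-X)`. -/
lemma coeff_comp_neg_X (f : R[X]) (k : ℕ) :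
    (f.comp (-X)).coeff k = (-1 : R) ^ k * f.coeff k := by
  induction f using Polynomial.induction_on' with
  | add p q hp hq => simp [Polynomial.add_comp, hp, hq, mul_add]
  | monomial n a =>
    have hC : ((-1 : R[X]) ^ n) = C ((-1 : R) ^ n) := by
      rw [map_pow, map_neg, map_one]
    have h1 : (monomial n a).comp (-X) = C ((-1 : R) ^ n * a) * X ^ n := by
      rw [← Polynomial.C_mul_X_pow_eq_monomial, Polynomial.mul_comp, Polynomial.C_comp,
        Polynomial.pow_comp, Polynomial.X_comp, neg_pow, hC, map_mul]
      ring
    rw [h1, Polynomial.coeff_C_mul, Polynomial.coeff_X_pow, Polynomial.coeff_monomial]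
    rcases eq_or_ne n k with rfl | hnk
    · simp [mul_comm]
    · simp [hnk, Ne.symm hnk]

variable [IsDomain R]

/-- Characteristic-two case: in a domain with `2 = 0`, odd powers of
polynomials with a nonzero odd coefficient have a nonzero odd coefficient. -/
lemma char2_case (h2 : (2 : R) = 0) (σ : ℕ) (hσ : Odd σ) (c : R[X])
    (h : ∀ j, Odd j → (c ^ σ).coeff j = 0) : ∀ j, Odd j → c.coeff j = 0 := by
  rcases eq_or_ne c 0 with rfl | hc
  · simp
  obtain ⟨m, hm⟩ := hσ
  -- c^2 is even
  have hsq : ∀ j, Odd j → (c ^ 2).coeff j = 0 := by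
    intro j hj
    rw [pow_two, Polynomial.coeff_mul]
    apply Finset.sum_involution (fun p _ => (p.2, p.1))
    · rintro ⟨a, b⟩ hab
      have : c.coeff a * c.coeff b + c.coeff b * c.coeff a
          = 2 * (c.coeff a * c.coeff b) := by ring
      rw [this, h2, zero_mul]
    · rintro ⟨a, b⟩ hab _
      simp only [Finset.HasAntidiagonal.mem_antidiagonal] at hab
      have : a ≠ b := by
        intro hab'; subst hab'
        have := Nat.odd_iff.mp hj; omega
      simp [Prod.ext_iff]; omega
    · rintro ⟨a, b⟩ hab
      simp only [Finset.HasAntidiagonal.mem_antidiagonal] at hab ⊢; omega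
    · rintro ⟨a, b⟩ hab; rfl
  set g : R[X] := (c ^ 2) ^ m with hg
  have hgeven : ∀ j, Odd j → g.coeff j = 0 := even_pow_even hsq m
  have hgne : g ≠ 0 := pow_ne_zero _ (pow_ne_zero _ hc)
  have hcg : ∀ j, Odd j → (c * g).coeff j = 0 := by
    intro j hj
    have : c * g = c ^ σ := by
      rw [hg, ← pow_mul, ← pow_succ']
      congr 1; omega
    rw [this]; exact h j hj
  -- decompose c
  set o : R[X] := oddPart c with ho
  set e : R[X] := c - o with he
  have hoc : ∀ j, Odd j → o.coeff j = c.coeff j := by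
    intro j hj; rw [ho, coeff_oddPart, if_pos hj]
  have hoe : ∀ j, ¬ Odd j → o.coeff j = 0 := by
    intro j hj; rw [ho, coeff_oddPart, if_neg hj]
  have heeven : ∀ j, Odd j → e.coeff j = 0 := by
    intro j hj; rw [he, Polynomial.coeff_sub, hoc j hj, sub_self]
  have hog : o * g = 0 := by
    ext j
    rw [Polynomial.coeff_zero]
    by_cases hj : Odd j
    · have h1 : (e * g).coeff j = 0 := by
        refine coeff_mul_parity (rf := 0) (rg := 0) ?_ ?_ ?_
        · intro i hi; exact heeven i (Nat.odd_iff.mpr (by omega))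
        · intro i hi; exact hgeven i (Nat.odd_iff.mpr (by omega))
        · have := Nat.odd_iff.mp hj; omega
      have h2' : (e * g).coeff j + (o * g).coeff j = 0 := by
        rw [← Polynomial.coeff_add, ← add_mul]
        have : e + o = c := by rw [he]; ring
        rw [this]; exact hcg j hj
      rw [h1, zero_add] at h2'; exact h2'
    · refine coeff_mul_parity (rf := 1) (rg := 0) ?_ ?_ ?_
      · intro i hi; exact hoe i (by rw [Nat.odd_iff]; omega)
      · intro i hi; exact hgeven i (Nat.odd_iff.mpr (by omega))
      · rw [Nat.odd_iff] at hj; omega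
  have ho0 : o = 0 := by
    rcases mul_eq_zero.mp hog with h' | h'
    · exact h'
    · exact absurd h' hgne
  intro j hj
  rw [← hoc j hj, ho0, Polynomial.coeff_zero]

/-- Odd prime case in a domain. -/
lemma prime_case (h2 : (2 : R) ≠ 0) {q : ℕ} (hq : q.Prime) (hqodd : Odd q)
    (c : R[X]) (h : ∀ j, Odd j → (c ^ q).coeff j = 0) : ∀ j, Odd j → c.coeff j = 0 := by
  by_cases hqR : (q : R) = 0
  · -- char R = q, use Frobenius
    have hchar : ringChar R = q := by
      have hdvd : ringChar R ∣ q := (ringChar.spec R q).mp hqR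
      rcases (Nat.Prime.eq_one_or_self_of_dvd hq _ hdvd) with h1 | h1
      · exact absurd h1 (CharP.char_ne_one R (ringChar R))
      · exact h1
    haveI : CharP R q := hchar ▸ ringChar.charP R
    haveI : Fact q.Prime := ⟨hq⟩
    intro j hj
    have hkey := Polynomial.map_frobenius_expand q c
    have : (c ^ q).coeff (q * j) = (c.coeff j) ^ q := by
      rw [← hkey, Polynomial.coeff_map, Polynomial.coeff_expand hq.pos,
        if_pos (dvd_mul_right q j), Nat.mul_div_cancel_left j hq.pos]
      rfl
    have h0 : (c ^ q).coeff (q * j) = 0 := h _ (hqodd.mul hj)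
    rw [this] at h0
    exact pow_eq_zero_iff hq.ne_zero |>.mp h0
  · -- char R ≠ q : use t ↦ -t
    rcases eq_or_ne c 0 with rfl | hc
    · simp
    set d : ℕ := c.natDegree with hd
    set L : R := c.leadingCoeff with hL
    have hLne : L ≠ 0 := Polynomial.leadingCoeff_ne_zero.mpr hc
    have hdeg_pow : (c ^ q).natDegree = q * d := by
      rw [Polynomial.natDegree_pow]
    have hcoef_top : (c ^ q).coeff (q * d) = L ^ q := by
      rw [← hdeg_pow, Polynomial.coeff_natDegree, Polynomial.leadingCoeff_pow]
    have hdeven : Even d := by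
      by_contra hdo
      have : (c ^ q).coeff (q * d) = 0 := h _ (hqodd.mul ((Nat.not_even_iff_odd.mp hdo)))
      rw [hcoef_top] at this
      exact pow_ne_zero _ hLne this
    set φc : R[X] := c.comp (-X) with hφ
    have hφco : ∀ k, φc.coeff k = (-1 : R) ^ k * c.coeff k := coeff_comp_neg_X c
    have hφd : φc.coeff d = L := by
      rw [hφco, hdeven.neg_one_pow, one_mul, hL, Polynomial.coeff_natDegree]
    have hφdeg : φc.natDegree = d := by
      apply le_antisymm
      · rw [Polynomial.natDegree_le_iff_coeff_eq_zero]
        intro N hN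
        rw [hφco, Polynomial.coeff_eq_zero_of_natDegree_lt hN, mul_zero]
      · exact Polynomial.le_natDegree_of_ne_zero (hφd ▸ hLne)
    have hφne : φc ≠ 0 := fun h0 => hLne (by rw [← hφd, h0, Polynomial.coeff_zero])
    have hφlead : φc.leadingCoeff = L := by
      rw [Polynomial.leadingCoeff, hφdeg, hφd]
    -- φ(c)^q = c^q
    have hφpow : φc ^ q = c ^ q := by
      rw [hφ, ← Polynomial.pow_comp]
      ext k
      rw [coeff_comp_neg_X]
      rcases Nat.even_or_odd k with hk | hk
      · rw [hk.neg_one_pow, one_mul]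
      · rw [h k hk, mul_zero]
    have hgeom : (∑ i ∈ Finset.range q, φc ^ i * c ^ (q - 1 - i)) * (φc - c) = 0 := by
      rw [geom_sum₂_mul, hφpow, sub_self]
    set Gs : R[X] := ∑ i ∈ Finset.range q, φc ^ i * c ^ (q - 1 - i) with hGs
    have hGscoef : Gs.coeff ((q - 1) * d) = (q : R) * L ^ (q - 1) := by
      rw [hGs, Polynomial.finset_sum_coeff]
      have hterm : ∀ i ∈ Finset.range q,
          (φc ^ i * c ^ (q - 1 - i)).coeff ((q - 1) * d) = L ^ (q - 1) := by
        intro i hi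
        have hi' : i ≤ q - 1 := by
          have := Finset.mem_range.mp hi; omega
        have hdeg : (φc ^ i * c ^ (q - 1 - i)).natDegree = (q - 1) * d := by
          rw [Polynomial.natDegree_mul (pow_ne_zero _ hφne) (pow_ne_zero _ hc),
            Polynomial.natDegree_pow, Polynomial.natDegree_pow, hφdeg, ← hd]
          have : i * d + (q - 1 - i) * d = (i + (q - 1 - i)) * d := by ring
          rw [this]; congr 1; omega
        rw [← hdeg, Polynomial.coeff_natDegree, Polynomial.leadingCoeff_mul,
          Polynomial.leadingCoeff_pow, Polynomial.leadingCoeff_pow, hφlead, ← hL,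
          ← pow_add]
        congr 1; omega
      rw [Finset.sum_congr rfl hterm, Finset.sum_const, Finset.card_range, nsmul_eq_mul]
    have hGsne : Gs ≠ 0 := by
      intro h0
      rw [h0, Polynomial.coeff_zero] at hGscoef
      exact mul_ne_zero hqR (pow_ne_zero _ hLne) hGscoef.symm
    have hφeq : φc = c := by
      rcases mul_eq_zero.mp hgeom with h' | h'
      · exact absurd h' hGsne
      · exact sub_eq_zero.mp h'
    intro j hj
    have := congrArg (fun p => p.coeff j) hφeq
    rw [hφco, hj.neg_one_pow, neg_one_mul] at this
    have h2j : 2 * c.coeff j = 0 := by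
      have := congrArg (· + c.coeff j) this
      simpa [two_mul] using this.symm
    rcases mul_eq_zero.mp h2j with h' | h'
    · exact absurd h' h2
    · exact h'

/-- Non-characteristic-two case, by induction over odd prime factors. -/
lemma not_char2_case (h2 : (2 : R) ≠ 0) : ∀ σ : ℕ, Odd σ → ∀ c : R[X],
    (∀ j, Odd j → (c ^ σ).coeff j = 0) → ∀ j, Odd j → c.coeff j = 0 := by
  intro σ
  induction σ using Nat.strong_induction_on with
  | _ σ ih =>
    intro hσ c h
    rcases eq_or_ne σ 1 with rfl | hσ1
    · simpa using h
    · set q : ℕ := σ.minFac with hqdef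
      have hq : q.Prime := Nat.minFac_prime hσ1
      have hqodd : Odd q := by
        rcases hq.eq_two_or_odd' with h' | h'
        · exfalso
          have : (2 : ℕ) ∣ σ := h' ▸ σ.minFac_dvd
          rw [Nat.odd_iff] at hσ; omega
        · exact h'
      obtain ⟨m, hm⟩ : q ∣ σ := σ.minFac_dvd
      have hmodd : Odd m := (Nat.odd_mul.mp (hm ▸ hσ)).2
      have hmlt : m < σ := by
        have hq2 : 2 ≤ q := hq.two_le
        have hm1 : 1 ≤ m := hmodd.pos
        have hσ0 : σ = q * m := hm
        nlinarith
      have h1 : ∀ j, Odd j → ((c ^ m) ^ q).coeff j = 0 := by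
        intro j hj
        rw [← pow_mul, mul_comm, ← hm]
        exact h j hj
      exact ih m hmlt hmodd c (prime_case h2 hq hqodd (c ^ m) h1)

/-- Key lemma: in a domain, if an odd power of `c` has vanishing odd coefficients,
then so does `c`. -/
lemma even_of_pow_even (σ : ℕ) (hσ : Odd σ) (c : R[X])
    (h : ∀ j, Odd j → (c ^ σ).coeff j = 0) : ∀ j, Odd j → c.coeff j = 0 := by
  by_cases h2 : (2 : R) = 0
  · exact char2_case h2 σ hσ c h
  · exact not_char2_case h2 σ hσ c h

end Helpers

section Membership

variable {S : Type*} [CommRing S] (I : Ideal S)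

/-- The subalgebra of polynomials whose odd coefficients lie in `I`. -/
noncomputable def reesT : Subalgebra S (Polynomial S) where
  carrier := {f | ∀ j, Odd j → f.coeff j ∈ I}
  mul_mem' := by
    intro f g hf hg j hj
    rw [Polynomial.coeff_mul]
    apply Ideal.sum_mem
    rintro ⟨a, b⟩ hab
    simp only [Finset.HasAntidiagonal.mem_antidiagonal] at hab
    rcases Nat.even_or_odd a with ha | ha
    · have hb : Odd b := by
        rw [Nat.odd_iff] at hj ⊢; rw [Nat.even_iff] at ha; omega
      exact Ideal.mul_mem_left _ _ (hg b hb)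
    · exact Ideal.mul_mem_right _ _ (hf a ha)
  add_mem' := by
    intro f g hf hg j hj
    rw [Polynomial.coeff_add]
    exact Ideal.add_mem _ (hf j hj) (hg j hj)
  one_mem' := by
    intro j hj
    have hj0 : j ≠ 0 := hj.pos.ne'
    rw [Polynomial.coeff_one]
    simpa [hj0, Ne.symm hj0] using I.zero_mem
  algebraMap_mem' := by
    intro s j hj
    have hj0 : j ≠ 0 := hj.pos.ne'
    rw [Polynomial.algebraMap_eq, Polynomial.coeff_C]
    simpa [hj0, Ne.symm hj0] using I.zero_mem

lemma mem_reesLike_iff {b : Polynomial S} :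
    b ∈ ReesLike S I ↔ ∀ j, Odd j → b.coeff j ∈ I := by
  constructor
  · intro hb
    have hle : ReesLike S I ≤ reesT I := by
      apply Algebra.adjoin_le
      rintro p (⟨a, ha, rfl⟩ | hp)
      · intro j hj
        rw [Polynomial.coeff_C_mul, Polynomial.coeff_X]
        rcases eq_or_ne j 1 with rfl | hj1
        · rw [if_pos rfl, mul_one]; exact ha
        · rw [if_neg (Ne.symm hj1), mul_zero]; exact I.zero_mem
      · simp only [Set.mem_singleton_iff] at hp
        subst hp
        intro j hj
        have hj2 : j ≠ 2 := by have := Nat.odd_iff.mp hj; omega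
        rw [Polynomial.coeff_X_pow]
        simpa [hj2] using I.zero_mem
    exact hle hb
  · intro hb
    have hX2 : (X : Polynomial S) ^ 2 ∈ ReesLike S I :=
      Algebra.subset_adjoin (Or.inr rfl)
    have hmono : ∀ (i : ℕ) (a : S), (Odd i → a ∈ I) →
        (monomial i a : Polynomial S) ∈ ReesLike S I := by
      intro i a ha
      rcases Nat.even_or_odd i with ⟨r, hr⟩ | hi
      · have heq : (monomial i a : Polynomial S) = C a * (X ^ 2) ^ r := by
          rw [← Polynomial.C_mul_X_pow_eq_monomial, ← pow_mul, hr]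
          ring
        rw [heq]
        exact mul_mem ((ReesLike S I).algebraMap_mem a) (pow_mem hX2 r)
      · obtain ⟨r, hr⟩ := hi
        have heq : (monomial i a : Polynomial S) = (C a * X) * (X ^ 2) ^ r := by
          rw [← Polynomial.C_mul_X_pow_eq_monomial, ← pow_mul, hr]
          ring
        rw [heq]
        exact mul_mem (Algebra.subset_adjoin (Or.inl ⟨a, ha ⟨r, hr⟩, rfl⟩)) (pow_mem hX2 r)
    rw [Polynomial.as_sum_range b]
    apply Subalgebra.sum_mem
    intro i _
    exact hmono i (b.coeff i) (fun hi => hb i hi)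

end Membership

/-- **Theorem (RLseminormal, (1) ⇒ (2)).** Let `S = k[x 1, …, x n]` and `I` a radical
homogeneous ideal.  Then for every odd integer `σ > 1` and every `b ∈ S[t]`, if
`b^σ ∈ S[It,t²]` then `b ∈ S[It,t²]`. -/
theorem odd_power_condition_of_isRadical
    (k : Type*) [Field k] (n : ℕ) (I : Ideal (MvPolynomial (Fin n) k))
    (hhom : ∀ p ∈ I, ∀ d : ℕ, MvPolynomial.homogeneousComponent d p ∈ I)
    (hrad : I.IsRadical) :
    ∀ σ : ℕ, 1 < σ → Odd σ →
      ∀ b : Polynomial (MvPolynomial (Fin n) k),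
        b ^ σ ∈ ReesLike (MvPolynomial (Fin n) k) I →
        b ∈ ReesLike (MvPolynomial (Fin n) k) I := by
  intro σ hσ1 hσodd b hb
  have hcoef : ∀ j, Odd j → (b ^ σ).coeff j ∈ I := (mem_reesLike_iff I).mp hb
  rw [mem_reesLike_iff]
  intro j hj
  have hmem : b.coeff j ∈ I.radical := by
    rw [Ideal.radical_eq_sInf]
    refine Submodule.mem_sInf.mpr ?_
    rintro J ⟨hIJ, hJprime⟩
    haveI := hJprime
    have key := even_of_pow_even σ hσodd (b.map (Ideal.Quotient.mk J)) ?_ j hj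
    · rwa [Polynomial.coeff_map, Ideal.Quotient.eq_zero_iff_mem] at key
    · intro m hm
      rw [← Polynomial.map_pow, Polynomial.coeff_map, Ideal.Quotient.eq_zero_iff_mem]
      exact hIJ (hcoef m hm)
  exact hrad hmem
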